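/- Let R be the free noncommutative F-algebra on two generators X₁, X₂ over F = ℚ(A), let J and B = R/J be as above, and let τ₁, τ₂ be the F-algebra automorphisms of B induced by T₁ and T₂. Then τ₁ and τ₂ satisfy τ₁τ₂τ₁ = τ₂τ₁τ₂ and (τ₁τ₂τ₁)² = id_B. Consequently, there is a group homomorphism from the presented group ⟨t₁, t₂ | t₁t₂t₁ = t₂t₁t₂, (t₁t₂t₁)² = 1⟩ (which is PSL₂(ℤ), the mapping class group of the one-holed torus modulo its center) to the group of F-algebra automorphisms of B sending t₁ to τ₁ and t₂ to τ₂. -/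

import Mathlib

/-- `F = ℚ(A)`, the field of rational functions in one variable over `ℚ`. -/
noncomputable abbrev F : Type := RatFunc ℚ

/-- The variable `A ∈ ℚ(A)`. -/
noncomputable def A : F := RatFunc.X

/-- The deformed bracket `[x,y]_A = A·(x*y) − A⁻¹·(y*x)` in an `F`-algebra. -/
noncomputable def brA {S : Type*} [Ring S] [Algebra F S] (x y : S) : S :=
  A • (x * y) - A⁻¹ • (y * x)

/-- `R`, the free noncommutative `F`-algebra on two generators. -/
noncomputable abbrev R : Type := FreeAlgebra F (Fin 2)

/-- The first generator `X₁`. -/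
noncomputable def X1 : R := FreeAlgebra.ι F 0

/-- The second generator `X₂`. -/
noncomputable def X2 : R := FreeAlgebra.ι F 1

/-- The generators as a function on `Fin 2`. -/
noncomputable def X : Fin 2 → R := ![X1, X2]

/-- `T₁ : X₁ ↦ X₁, X₂ ↦ [X₁,X₂]_A`. -/
noncomputable def T1 : R →ₐ[F] R := FreeAlgebra.lift F ![X1, brA X1 X2]

/-- `T₁⁻ : X₁ ↦ X₁, X₂ ↦ [X₂,X₁]_A`. -/
noncomputable def T1inv : R →ₐ[F] R := FreeAlgebra.lift F ![X1, brA X2 X1]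

/-- `T₂ : X₁ ↦ [X₂,X₁]_A, X₂ ↦ X₂`. -/
noncomputable def T2 : R →ₐ[F] R := FreeAlgebra.lift F ![brA X2 X1, X2]

/-- `T₂⁻ : X₁ ↦ [X₁,X₂]_A, X₂ ↦ X₂`. -/
noncomputable def T2inv : R →ₐ[F] R := FreeAlgebra.lift F ![brA X1 X2, X2]

/-- The two-sided ideal `J` generated by `[[X₁,X₂]_A, X₁]_A − X₂` and
`[[X₂,X₁]_A, X₂]_A − X₁`. -/
noncomputable def J : TwoSidedIdeal R :=
  TwoSidedIdeal.span {brA (brA X1 X2) X1 - X2, brA (brA X2 X1) X2 - X1}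

/-- The quotient algebra `B = R/J`. -/
noncomputable abbrev B : Type := RingQuot (fun x y : R => x - y ∈ J)

/-- The quotient map `π : R → B` as an `F`-algebra homomorphism. -/
noncomputable def pi : R →ₐ[F] B := RingQuot.mkAlgHom F (fun x y : R => x - y ∈ J)

/-- The relations of the presentation
`⟨t₁, t₂ | t₁t₂t₁ = t₂t₁t₂, (t₁t₂t₁)² = 1⟩` of `PSL₂(ℤ)`, the mapping class group of the
one-holed torus modulo its center. -/
noncomputable def rels : Set (FreeGroup (Fin 2)) :=
  {FreeGroup.of 0 * FreeGroup.of 1 * FreeGroup.of 0 *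
      (FreeGroup.of 1 * FreeGroup.of 0 * FreeGroup.of 1)⁻¹,
   (FreeGroup.of 0 * FreeGroup.of 1 * FreeGroup.of 0) ^ 2}

section auxbr

variable {S : Type*} [Ring S] [Algebra F S]

lemma brA_comm (x y : S) : brA x (brA y x) = brA (brA x y) x := by
  simp only [brA, mul_sub, sub_mul, smul_sub, mul_smul_comm, smul_mul_assoc, smul_smul, mul_assoc]
  rw [mul_comm A A⁻¹]
  abel

lemma brA_sub_right (x y z : S) : brA x (y - z) = brA x y - brA x z := by
  simp only [brA, mul_sub, sub_mul, smul_sub]; abel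

lemma brA_sub_left (x y z : S) : brA (x - y) z = brA x z - brA y z := by
  simp only [brA, mul_sub, sub_mul, smul_sub]; abel

lemma key1 (x y : S) : brA (brA x (brA x y)) x - brA x y = brA x (brA (brA x y) x - y) := by
  rw [brA_sub_right, ← brA_comm]

lemma key2 (x y : S) : brA (brA (brA x y) x) (brA x y) - x
    = (brA (brA y x) y - x) + brA (brA (brA x y) x - y) (brA x y) := by
  rw [brA_sub_left, brA_comm]; abel

lemma key3 (x y : S) : brA (brA x (brA y x)) x - brA y x = brA (brA (brA x y) x - y) x := by
  rw [brA_sub_left, brA_comm]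

lemma key4 (x y : S) : brA (brA (brA y x) x) (brA y x) - x
    = (brA (brA y x) y - x) + brA (brA y x) (brA (brA x y) x - y) := by
  rw [brA_sub_right,
    show brA (brA (brA y x) x) (brA y x) = brA (brA y x) (brA x (brA y x)) from
      (brA_comm _ _).symm,
    show brA x (brA y x) = brA (brA x y) x from brA_comm x y]
  abel

lemma map_brA_equiv {S' : Type*} [Ring S'] [Algebra F S'] (e : S ≃ₐ[F] S') (x y : S) :
    e (brA x y) = brA (e x) (e y) := by
  simp [brA, map_sub, map_mul, map_smul]

lemma map_brA {S' : Type*} [Ring S'] [Algebra F S'] (f : S →ₐ[F] S') (x y : S) :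
    f (brA x y) = brA (f x) (f y) := by
  simp [brA, map_sub, map_mul, map_smul]

end auxbr

/-- First generator of `J`. -/
noncomputable def g1 : R := brA (brA X1 X2) X1 - X2
/-- Second generator of `J`. -/
noncomputable def g2 : R := brA (brA X2 X1) X2 - X1

lemma g1_mem : g1 ∈ J := TwoSidedIdeal.subset_span (by left; rfl)
lemma g2_mem : g2 ∈ J := TwoSidedIdeal.subset_span (by right; rfl)

lemma brA_mem_left {z : R} (hz : z ∈ J) (w : R) : brA w z ∈ J := by
  refine J.sub_mem ?_ ?_
  · rw [Algebra.smul_def]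
    exact J.mul_mem_left _ _ (J.mul_mem_left _ _ hz)
  · rw [Algebra.smul_def]
    exact J.mul_mem_left _ _ (J.mul_mem_right _ _ hz)

lemma brA_mem_right {z : R} (hz : z ∈ J) (w : R) : brA z w ∈ J := by
  refine J.sub_mem ?_ ?_
  · rw [Algebra.smul_def]
    exact J.mul_mem_left _ _ (J.mul_mem_right _ _ hz)
  · rw [Algebra.smul_def]
    exact J.mul_mem_left _ _ (J.mul_mem_left _ _ hz)

-- evaluation of the endomorphisms on generators
lemma T1_X1 : T1 X1 = X1 := by simp [T1, X1, FreeAlgebra.lift_ι_apply]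
lemma T1_X2 : T1 X2 = brA X1 X2 := by simp [T1, X2, FreeAlgebra.lift_ι_apply]
lemma T1inv_X1 : T1inv X1 = X1 := by simp [T1inv, X1, FreeAlgebra.lift_ι_apply]
lemma T1inv_X2 : T1inv X2 = brA X2 X1 := by simp [T1inv, X2, FreeAlgebra.lift_ι_apply]
lemma T2_X1 : T2 X1 = brA X2 X1 := by simp [T2, X1, FreeAlgebra.lift_ι_apply]
lemma T2_X2 : T2 X2 = X2 := by simp [T2, X2, FreeAlgebra.lift_ι_apply]
lemma T2inv_X1 : T2inv X1 = brA X1 X2 := by simp [T2inv, X1, FreeAlgebra.lift_ι_apply]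
lemma T2inv_X2 : T2inv X2 = X2 := by simp [T2inv, X2, FreeAlgebra.lift_ι_apply]

lemma preserves (f : R →ₐ[F] R) (h1 : f g1 ∈ J) (h2 : f g2 ∈ J) :
    ∀ x ∈ J, f x ∈ J := by
  intro x hx
  have : x ∈ TwoSidedIdeal.comap (f : R →+* R) J := by
    refine TwoSidedIdeal.mem_span_iff.mp hx _ ?_
    rintro y (rfl | rfl)
    · exact (TwoSidedIdeal.mem_comap _).mpr h1
    · exact (TwoSidedIdeal.mem_comap _).mpr h2
  exact (TwoSidedIdeal.mem_comap _).mp this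

lemma T1_g1 : T1 g1 ∈ J := by
  have : T1 g1 = brA X1 g1 := by
    simp only [g1, map_sub, map_brA, T1_X1, T1_X2]
    exact key1 X1 X2
  rw [this]; exact brA_mem_left g1_mem _

lemma T1_g2 : T1 g2 ∈ J := by
  have : T1 g2 = g2 + brA g1 (brA X1 X2) := by
    simp only [g1, g2, map_sub, map_brA, T1_X1, T1_X2]
    exact key2 X1 X2
  rw [this]; exact J.add_mem g2_mem (brA_mem_right g1_mem _)

lemma T1inv_g1 : T1inv g1 ∈ J := by
  have : T1inv g1 = brA g1 X1 := by
    simp only [g1, map_sub, map_brA, T1inv_X1, T1inv_X2]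
    exact key3 X1 X2
  rw [this]; exact brA_mem_right g1_mem _

lemma T1inv_g2 : T1inv g2 ∈ J := by
  have : T1inv g2 = g2 + brA (brA X2 X1) g1 := by
    simp only [g1, g2, map_sub, map_brA, T1inv_X1, T1inv_X2]
    exact key4 X1 X2
  rw [this]; exact J.add_mem g2_mem (brA_mem_left g1_mem _)

lemma T2_g2 : T2 g2 ∈ J := by
  have : T2 g2 = brA X2 g2 := by
    simp only [g2, map_sub, map_brA, T2_X1, T2_X2]
    exact key1 X2 X1
  rw [this]; exact brA_mem_left g2_mem _

lemma T2_g1 : T2 g1 ∈ J := by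
  have : T2 g1 = g1 + brA g2 (brA X2 X1) := by
    simp only [g1, g2, map_sub, map_brA, T2_X1, T2_X2]
    exact key2 X2 X1
  rw [this]; exact J.add_mem g1_mem (brA_mem_right g2_mem _)

lemma T2inv_g2 : T2inv g2 ∈ J := by
  have : T2inv g2 = brA g2 X2 := by
    simp only [g2, map_sub, map_brA, T2inv_X1, T2inv_X2]
    exact key3 X2 X1
  rw [this]; exact brA_mem_right g2_mem _

lemma T2inv_g1 : T2inv g1 ∈ J := by
  have : T2inv g1 = g1 + brA (brA X1 X2) g2 := by
    simp only [g1, g2, map_sub, map_brA, T2inv_X1, T2inv_X2]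
    exact key4 X2 X1
  rw [this]; exact J.add_mem g1_mem (brA_mem_left g2_mem _)

/-- Descend an endomorphism of `R` preserving `J` to `B`. -/
noncomputable def descend (f : R →ₐ[F] R) (hf : ∀ x ∈ J, f x ∈ J) : B →ₐ[F] B :=
  RingQuot.liftAlgHom F ⟨pi.comp f, fun x y h => by
    have : f x - f y ∈ J := by simpa [map_sub] using hf _ h
    exact RingQuot.mkAlgHom_rel F this⟩

lemma descend_pi (f : R →ₐ[F] R) (hf : ∀ x ∈ J, f x ∈ J) (r : R) :
    descend f hf (pi r) = pi (f r) :=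
  RingQuot.liftAlgHom_mkAlgHom_apply _ _ _ _

lemma algHom_ext {f g : B →ₐ[F] B} (h1 : f (pi X1) = g (pi X1))
    (h2 : f (pi X2) = g (pi X2)) : f = g := by
  refine RingQuot.ringQuot_ext' _ _ _ ?_
  refine FreeAlgebra.hom_ext (funext fun i => ?_)
  fin_cases i
  · exact h1
  · exact h2

/-- `T₁, T₂` induce `F`-algebra automorphisms `τ₁, τ₂` of `B = R/J` satisfying
`τ₁τ₂τ₁ = τ₂τ₁τ₂` and `(τ₁τ₂τ₁)² = id`; consequently there is a group homomorphism from the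
presented group `⟨t₁, t₂ | t₁t₂t₁ = t₂t₁t₂, (t₁t₂t₁)² = 1⟩` to the group of `F`-algebra
automorphisms of `B` sending `t₁ ↦ τ₁` and `t₂ ↦ τ₂`. -/
theorem mapping_class_group_action_on_quotient :
    ∃ τ1 τ2 : B ≃ₐ[F] B,
      (∀ x : R, τ1 (pi x) = pi (T1 x)) ∧ (∀ x : R, τ2 (pi x) = pi (T2 x)) ∧
      τ1 * τ2 * τ1 = τ2 * τ1 * τ2 ∧ (τ1 * τ2 * τ1) ^ 2 = 1 ∧
      ∃ φ : PresentedGroup rels →* (B ≃ₐ[F] B),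
        φ (PresentedGroup.of 0) = τ1 ∧ φ (PresentedGroup.of 1) = τ2 := by
  set x : B := pi X1 with hx
  set y : B := pi X2 with hy
  have hp1 := preserves T1 T1_g1 T1_g2
  have hp1' := preserves T1inv T1inv_g1 T1inv_g2
  have hp2 := preserves T2 T2_g1 T2_g2
  have hp2' := preserves T2inv T2inv_g1 T2inv_g2
  -- relations in B
  have rel1 : brA (brA x y) x = y := by
    have h : pi g1 = pi 0 := RingQuot.mkAlgHom_rel F (by simpa using g1_mem)
    have : pi (brA (brA X1 X2) X1) - pi X2 = 0 := by
      simpa [g1, map_sub] using h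
    rw [sub_eq_zero] at this
    simpa [map_brA] using this
  have rel2 : brA (brA y x) y = x := by
    have h : pi g2 = pi 0 := RingQuot.mkAlgHom_rel F (by simpa using g2_mem)
    have : pi (brA (brA X2 X1) X2) - pi X1 = 0 := by
      simpa [g2, map_sub] using h
    rw [sub_eq_zero] at this
    simpa [map_brA] using this
  -- the four descended endomorphisms
  set t1 := descend T1 hp1 with ht1
  set t1' := descend T1inv hp1' with ht1'
  set t2 := descend T2 hp2 with ht2
  set t2' := descend T2inv hp2' with ht2'
  have t1x : t1 x = x := by rw [hx, descend_pi, T1_X1]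
  have t1y : t1 y = brA x y := by rw [hy, descend_pi, T1_X2, map_brA]
  have t1'x : t1' x = x := by rw [hx, descend_pi, T1inv_X1]
  have t1'y : t1' y = brA y x := by rw [hy, descend_pi, T1inv_X2, map_brA]
  have t2x : t2 x = brA y x := by rw [hx, descend_pi, T2_X1, map_brA]
  have t2y : t2 y = y := by rw [hy, descend_pi, T2_X2]
  have t2'x : t2' x = brA x y := by rw [hx, descend_pi, T2inv_X1, map_brA]
  have t2'y : t2' y = y := by rw [hy, descend_pi, T2inv_X2]
  -- τ1
  have e1a : t1.comp t1' = AlgHom.id F B := by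
    refine algHom_ext ?_ ?_
    · simp [← hx, t1'x, t1x]
    · simp only [AlgHom.coe_comp, Function.comp_apply, AlgHom.id_apply, ← hy]
      rw [t1'y, map_brA, t1y, t1x, rel1]
  have e1b : t1'.comp t1 = AlgHom.id F B := by
    refine algHom_ext ?_ ?_
    · simp [← hx, t1x, t1'x]
    · simp only [AlgHom.coe_comp, Function.comp_apply, AlgHom.id_apply, ← hy]
      rw [t1y, map_brA, t1'x, t1'y, brA_comm, rel1]
  have e2a : t2.comp t2' = AlgHom.id F B := by
    refine algHom_ext ?_ ?_
    · simp only [AlgHom.coe_comp, Function.comp_apply, AlgHom.id_apply, ← hx]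
      rw [t2'x, map_brA, t2x, t2y, rel2]
    · simp [← hy, t2'y, t2y]
  have e2b : t2'.comp t2 = AlgHom.id F B := by
    refine algHom_ext ?_ ?_
    · simp only [AlgHom.coe_comp, Function.comp_apply, AlgHom.id_apply, ← hx]
      rw [t2x, map_brA, t2'y, t2'x, brA_comm, rel2]
    · simp [← hy, t2y, t2'y]
  set τ1 : B ≃ₐ[F] B := AlgEquiv.ofAlgHom t1 t1' e1a e1b with hτ1def
  set τ2 : B ≃ₐ[F] B := AlgEquiv.ofAlgHom t2 t2' e2a e2b with hτ2def
  have hτ1x : τ1 x = x := t1x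
  have hτ1y : τ1 y = brA x y := t1y
  have hτ2x : τ2 x = brA y x := t2x
  have hτ2y : τ2 y = y := t2y
  have equiv_ext : ∀ {e e' : B ≃ₐ[F] B}, e x = e' x → e y = e' y → e = e' := by
    intro e e' h1 h2
    have : (e : B →ₐ[F] B) = e' := algHom_ext (by simpa [hx] using h1) (by simpa [hy] using h2)
    exact AlgEquiv.ext fun b => DFunLike.congr_fun this b
  have braid : τ1 * τ2 * τ1 = τ2 * τ1 * τ2 := by
    refine equiv_ext ?_ ?_
    · simp only [AlgEquiv.mul_apply]
      rw [hτ1x, hτ2x, map_brA_equiv, hτ1y, hτ1x, rel1, hτ2y]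
    · simp only [AlgEquiv.mul_apply]
      rw [hτ2y, hτ1y, map_brA_equiv, hτ2x, hτ2y, rel2, hτ1x]
  have σx : (τ1 * τ2 * τ1) x = y := by
    simp only [AlgEquiv.mul_apply]
    rw [hτ1x, hτ2x, map_brA_equiv, hτ1y, hτ1x, rel1]
  have σy : (τ1 * τ2 * τ1) y = x := by
    simp only [AlgEquiv.mul_apply]
    rw [hτ1y, map_brA_equiv, hτ2x, hτ2y, rel2, hτ1x]
  have hsq : (τ1 * τ2 * τ1) ^ 2 = 1 := by
    refine equiv_ext ?_ ?_
    · rw [pow_two, AlgEquiv.mul_apply, σx, σy, AlgEquiv.one_apply]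
    · rw [pow_two, AlgEquiv.mul_apply, σy, σx, AlgEquiv.one_apply]
  have hrels : ∀ r ∈ rels, FreeGroup.lift ![τ1, τ2] r = 1 := by
    intro r hr
    simp only [rels, Set.mem_insert_iff, Set.mem_singleton_iff] at hr
    rcases hr with rfl | rfl
    · simp only [map_mul, map_inv, FreeGroup.lift_apply_of, Matrix.cons_val_zero, Matrix.cons_val_one,
        Matrix.head_cons]
      rw [braid, mul_inv_cancel]
    · simp only [map_pow, map_mul, FreeGroup.lift_apply_of, Matrix.cons_val_zero, Matrix.cons_val_one,
        Matrix.head_cons]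
      exact hsq
  refine ⟨τ1, τ2, fun r => descend_pi T1 hp1 r, fun r => descend_pi T2 hp2 r, braid, hsq,
    PresentedGroup.toGroup hrels, ?_, ?_⟩
  · rw [PresentedGroup.toGroup.of]; rfl
  · rw [PresentedGroup.toGroup.of]; rfl
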